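/- Let (T, ω, μ) be a homogeneous model tree with root x₀, branching b ≥ 2, standard edge weights and constant measure μ ≡ 1, let d be the graph distance from the root, let α > 1, and define V(x) := (1 + d(x,x₀))^{-α}. Then: (a) for every Λ ∈ (0,1) one has ∑_{x ∈ T, d(x,x₀) ≥ 1} e^{-Λ d(x,x₀)^α} μ(x) = ∑_{n=1}^{∞} b^n e^{-Λ n^α} < ∞; and (b) there exists a nontrivial bounded function u : T → ℝ with Δu(x) − V(x)u(x) = 0 for all x ∈ T. Hence the Liouville property fails for this potential even though the summability condition (2.8) of the Liouville theorem holds for every Λ ∈ (0,1). -/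

import Mathlib

open Filter

/-- Radial solution data: `(fgAux b α n).1 = f n`, `(fgAux b α n).2 = f (n+1) - f n`. -/
noncomputable def fgAux (b : ℕ) (α : ℝ) : ℕ → ℝ × ℝ
  | 0 => (1, 1 / (b : ℝ))
  | n + 1 =>
      ((fgAux b α n).1 + (fgAux b α n).2,
        ((fgAux b α n).2 +
          (1 + ((n : ℝ) + 1)) ^ (-α) * ((fgAux b α n).1 + (fgAux b α n).2)) / (b : ℝ))

/-- Majorant sequence for `g/f`. -/
noncomputable def tAux (b : ℕ) (α : ℝ) : ℕ → ℝ
  | 0 => 1 / (b : ℝ)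
  | n + 1 => (tAux b α n + (1 + ((n : ℝ) + 1)) ^ (-α)) / 2

/-- **Optimality (Section 7.3).** On a homogeneous model tree with branching `b ≥ 2`,
standard edge weights and measure `μ ≡ 1`, with `V(x) = (1 + d(x,x₀))^{-α}`, `α > 1`:
(a) for every `Λ ∈ (0,1)` the series `∑_{d(x,x₀) ≥ 1} e^{-Λ d(x,x₀)^α}` converges and
equals `∑_{n ≥ 1} bⁿ e^{-Λ nᵅ}`; (b) there is a nontrivial bounded solution of
`Δu − Vu = 0`, so the Liouville property fails although condition (2.8) holds. -/
theorem stmt17 {T : Type*} [Countable T] [Infinite T]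
    (ω : T → T → ℝ)
    (hω_symm : ∀ x y, ω x y = ω y x)
    (hω_diag : ∀ x, ω x x = 0)
    (hω01 : ∀ x y, ω x y = 0 ∨ ω x y = 1)
    (x₀ : T) (b : ℕ) (hb : 2 ≤ b)
    (D : T → ℕ) (hD₀ : D x₀ = 0) (hDpos : ∀ x, x ≠ x₀ → 1 ≤ D x)
    (hadj : ∀ x y, ω x y = 1 → D y = D x + 1 ∨ D x = D y + 1)
    (hroot : {y : T | ω x₀ y = 1}.ncard = b)
    (hup : ∀ x : T, {y : T | ω x y = 1 ∧ D y = D x + 1}.ncard = b)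
    (hdown : ∀ x : T, x ≠ x₀ → {y : T | ω x y = 1 ∧ D y + 1 = D x}.ncard = 1)
    (α : ℝ) (hα : 1 < α)
    (V : T → ℝ) (hV : ∀ x, V x = (1 + (D x : ℝ)) ^ (-α)) :
    (∀ Λ : ℝ, 0 < Λ → Λ < 1 →
      Summable (fun x : {x : T // 1 ≤ D x} =>
        Real.exp (-Λ * ((D x.1 : ℝ)) ^ α)) ∧
      Summable (fun n : ℕ =>
        (b : ℝ) ^ (n + 1) * Real.exp (-Λ * ((n : ℝ) + 1) ^ α)) ∧
      (∑' x : {x : T // 1 ≤ D x}, Real.exp (-Λ * ((D x.1 : ℝ)) ^ α))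
        = ∑' n : ℕ, (b : ℝ) ^ (n + 1) * Real.exp (-Λ * ((n : ℝ) + 1) ^ α)) ∧
    (∃ u : T → ℝ, (∃ x, u x ≠ 0) ∧ (∃ C : ℝ, ∀ x, |u x| ≤ C) ∧
      ∀ x : T, (∑' y, ω x y * (u y - u x)) - V x * u x = 0) := by
  classical
  have hbR : (0 : ℝ) < b := by
    have : 0 < b := by omega
    exact_mod_cast this
  have hDzero : ∀ x : T, D x = 0 → x = x₀ := by
    intro x hx
    by_contra h
    have := hDpos x h
    omega
  have hUpFin : ∀ x : T, {y : T | ω x y = 1 ∧ D y = D x + 1}.Finite := by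
    intro x
    apply Set.finite_of_ncard_ne_zero
    rw [hup x]; omega
  have hDownOne : ∀ x : T, x ≠ x₀ → ∃ z, {y : T | ω x y = 1 ∧ D y + 1 = D x} = {z} :=
    fun x hx => Set.ncard_eq_one.1 (hdown x hx)
  -- uniqueness of parent
  have hparent : ∀ y z z' : T, ω z y = 1 → D y = D z + 1 → ω z' y = 1 → D y = D z' + 1 →
      z = z' := by
    intro y z z' h1 h2 h3 h4
    have hy : y ≠ x₀ := by
      intro h; rw [h, hD₀] at h2; omega
    obtain ⟨w, hw⟩ := hDownOne y hy
    have hz : z ∈ {v : T | ω y v = 1 ∧ D v + 1 = D y} := ⟨by rw [← hω_symm]; exact h1, by omega⟩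
    have hz' : z' ∈ {v : T | ω y v = 1 ∧ D v + 1 = D y} := ⟨by rw [← hω_symm]; exact h3, by omega⟩
    rw [hw] at hz hz'
    simp only [Set.mem_singleton_iff] at hz hz'
    rw [hz, hz']
  -- spheres
  have sphere : ∀ n : ℕ, {x : T | D x = n}.Finite ∧ {x : T | D x = n}.ncard = b ^ n := by
    intro n
    induction n with
    | zero =>
      have h0 : {x : T | D x = 0} = {x₀} := by
        ext x; simp only [Set.mem_setOf_eq, Set.mem_singleton_iff]
        exact ⟨hDzero x, fun h => h ▸ hD₀⟩
      rw [h0]; simp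
    | succ n ih =>
      set sF : Finset T := ih.1.toFinset with hsF
      set bu : Finset T := sF.biUnion (fun z => (hUpFin z).toFinset) with hbu
      have hmem : ∀ y : T, y ∈ bu ↔ D y = n + 1 := by
        intro y
        simp only [hbu, Finset.mem_biUnion, Set.Finite.mem_toFinset, Set.mem_setOf_eq, hsF]
        constructor
        · rintro ⟨z, hz, _, h2⟩; omega
        · intro hy
          have hy0 : y ≠ x₀ := by intro h; rw [h, hD₀] at hy; omega
          obtain ⟨z, hz⟩ := hDownOne y hy0
          have hzz : z ∈ {v : T | ω y v = 1 ∧ D v + 1 = D y} := by rw [hz]; rfl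
          obtain ⟨ha, hb'⟩ := hzz
          exact ⟨z, by omega, by rw [← hω_symm]; exact ha, by omega⟩
      have hset : {x : T | D x = n + 1} = ↑bu := by
        ext y; simp only [Set.mem_setOf_eq, Finset.coe_sort_coe, Finset.mem_coe, hmem y]
      constructor
      · rw [hset]; exact bu.finite_toSet
      · rw [hset, Set.ncard_coe_finset]
        rw [hbu, Finset.card_biUnion]
        · have : ∀ z ∈ sF, ((hUpFin z).toFinset).card = b := by
            intro z _
            rw [← Set.ncard_eq_toFinset_card _ (hUpFin z)]
            exact hup z
          rw [Finset.sum_congr rfl this, Finset.sum_const, smul_eq_mul]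
          have : sF.card = b ^ n := by
            rw [hsF, ← Set.ncard_eq_toFinset_card _ ih.1]
            exact ih.2
          rw [this, pow_succ]
        · intro z hz z' hz' hne
          rw [Function.onFun, Finset.disjoint_left]
          intro y hy hy'
          rw [Set.Finite.mem_toFinset] at hy hy'
          exact hne (hparent y z z' hy.1 hy.2 hy'.1 hy'.2)
  constructor
  · -- part (a)
    intro Λ hΛ0 hΛ1
    have hrs : Summable (fun n : ℕ => (b : ℝ) ^ (n + 1) * Real.exp (-Λ * ((n : ℝ) + 1) ^ α)) := by
      apply summable_of_ratio_norm_eventually_le (r := 1/2) (by norm_num)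
      have htend : Tendsto (fun n : ℕ => ((n : ℝ) + 2) ^ (α - 1)) atTop atTop := by
        apply (tendsto_rpow_atTop (by linarith)).comp
        apply tendsto_atTop_add_const_right
        exact tendsto_natCast_atTop_atTop
      filter_upwards [htend.eventually_ge_atTop (Real.log (2 * b) / Λ)] with n hn
      have h2 : (0:ℝ) < (n : ℝ) + 2 := by positivity
      have h1 : (0:ℝ) < (n : ℝ) + 1 := by positivity
      -- δ := ((n:ℝ)+2)^α - ((n:ℝ)+1)^α ≥ ((n:ℝ)+2)^(α-1)
      have e2 : ((n : ℝ) + 2) ^ α = ((n : ℝ) + 2) * ((n : ℝ) + 2) ^ (α - 1) := by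
        rw [← Real.rpow_one_add' (by positivity) (by intro h; linarith [h] )]
        ring_nf
      have e1 : ((n : ℝ) + 1) ^ α = ((n : ℝ) + 1) * ((n : ℝ) + 1) ^ (α - 1) := by
        rw [← Real.rpow_one_add' (by positivity) (by intro h; linarith [h])]
        ring_nf
      have hmono : ((n : ℝ) + 1) ^ (α - 1) ≤ ((n : ℝ) + 2) ^ (α - 1) :=
        Real.rpow_le_rpow (by positivity) (by linarith) (by linarith)
      have hδ : ((n : ℝ) + 2) ^ (α - 1) ≤ ((n : ℝ) + 2) ^ α - ((n : ℝ) + 1) ^ α := by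
        rw [e1, e2]
        have hA : (0:ℝ) ≤ ((n : ℝ) + 2) ^ (α - 1) := Real.rpow_nonneg (by positivity) _
        nlinarith [hmono]
      set δ := ((n : ℝ) + 2) ^ α - ((n : ℝ) + 1) ^ α with hδdef
      have hΛδ : Real.log (2 * b) ≤ Λ * δ := by
        have : Real.log (2 * b) / Λ ≤ δ := le_trans hn hδ
        calc Real.log (2 * b) = Λ * (Real.log (2 * b) / Λ) := by field_simp
        _ ≤ Λ * δ := by apply mul_le_mul_of_nonneg_left this (le_of_lt hΛ0)
      have hexp : Real.exp (-(Λ * δ)) ≤ 1 / (2 * b) := by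
        rw [← Real.exp_log (show (0:ℝ) < 1/(2*b) by positivity)]
        apply Real.exp_le_exp.2
        rw [Real.log_div (by norm_num) (by positivity), Real.log_one]
        linarith
      have hsplit : Real.exp (-Λ * (((n:ℕ)+1 : ℝ) + 1) ^ α)
          = Real.exp (-Λ * ((n : ℝ) + 1) ^ α) * Real.exp (-(Λ * δ)) := by
        rw [← Real.exp_add]
        push_cast
        rw [hδdef]
        ring_nf
      rw [Real.norm_eq_abs, Real.norm_eq_abs, abs_of_pos (by positivity), abs_of_pos (by positivity)]
      push_cast
      calc (b:ℝ) ^ (n + 1 + 1) * Real.exp (-Λ * ((n : ℝ) + 1 + 1) ^ α)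
          = (b:ℝ) ^ (n + 1) * (b * (Real.exp (-Λ * ((n : ℝ) + 1) ^ α) * Real.exp (-(Λ * δ)))) := by
            rw [pow_succ]
            have := hsplit
            push_cast at this
            rw [this]; ring
        _ ≤ (b:ℝ) ^ (n + 1) * (b * (Real.exp (-Λ * ((n : ℝ) + 1) ^ α) * (1/(2*b)))) := by
            have hB : (0:ℝ) ≤ (b:ℝ) ^ (n+1) := by positivity
            have hE : (0:ℝ) ≤ Real.exp (-Λ * ((n : ℝ) + 1) ^ α) := le_of_lt (Real.exp_pos _)
            apply mul_le_mul_of_nonneg_left _ hB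
            apply mul_le_mul_of_nonneg_left _ (le_of_lt hbR)
            exact mul_le_mul_of_nonneg_left hexp hE
        _ = 1/2 * ((b:ℝ) ^ (n + 1) * Real.exp (-Λ * ((n : ℝ) + 1) ^ α)) := by
            field_simp
    have hmain : Summable (fun x : {x : T // 1 ≤ D x} => Real.exp (-Λ * ((D x.1 : ℝ)) ^ α)) ∧
        (∑' x : {x : T // 1 ≤ D x}, Real.exp (-Λ * ((D x.1 : ℝ)) ^ α))
          = ∑' n : ℕ, (b : ℝ) ^ (n + 1) * Real.exp (-Λ * ((n : ℝ) + 1) ^ α) := by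
      set F : T → ENNReal := fun x => ENNReal.ofReal (Real.exp (-Λ * ((D x : ℝ)) ^ α)) with hF
      let e : {x : T // 1 ≤ D x} ≃ (Σ n : ℕ, {x : T // D x = n + 1}) :=
        { toFun := fun x => ⟨D x.1 - 1, x.1, by omega⟩
          invFun := fun p => ⟨p.2.1, by have := p.2.2; omega⟩
          left_inv := fun x => rfl
          right_inv := by
            rintro ⟨n, y, hy⟩
            have h : D y - 1 = n := by omega
            subst h
            rfl }
      -- fintype instances on spheres
      have hfib : ∀ n : ℕ, ∑' y : {x : T // D x = n + 1}, F y.1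
          = ENNReal.ofReal ((b : ℝ) ^ (n + 1) * Real.exp (-Λ * ((n : ℝ) + 1) ^ α)) := by
        intro n
        haveI : Fintype {x : T // D x = n + 1} := (sphere (n + 1)).1.fintype
        have hconst : ∀ y : {x : T // D x = n + 1},
            F y.1 = ENNReal.ofReal (Real.exp (-Λ * ((n : ℝ) + 1) ^ α)) := by
          rintro ⟨y, hy⟩
          simp only [hF, hy]
          push_cast
          ring_nf
        rw [tsum_congr hconst, tsum_fintype, Finset.sum_const, Finset.card_univ]
        have hcard : Fintype.card {x : T // D x = n + 1} = b ^ (n + 1) := by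
          rw [← Nat.card_eq_fintype_card]
          exact (Nat.card_coe_set_eq {x : T | D x = n + 1}).trans (sphere (n + 1)).2
        rw [hcard, nsmul_eq_mul]
        rw [ENNReal.ofReal_mul (by positivity)]
        congr 1
        rw [show ((b : ℝ) ^ (n+1)) = (((b ^ (n+1) : ℕ) : ℝ)) by push_cast; ring]
        exact (ENNReal.ofReal_natCast _).symm
      have key : ∑' x : {x : T // 1 ≤ D x}, F x.1
          = ∑' n : ℕ, ENNReal.ofReal ((b : ℝ) ^ (n + 1) * Real.exp (-Λ * ((n : ℝ) + 1) ^ α)) := by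
        rw [← Equiv.tsum_eq e.symm (fun x : {x : T // 1 ≤ D x} => F x.1)]
        rw [ENNReal.tsum_sigma' (fun p : (Σ n : ℕ, {x : T // D x = n + 1}) => F (e.symm p).1)]
        exact tsum_congr hfib
      have hofreal : ∑' n : ℕ, ENNReal.ofReal ((b : ℝ) ^ (n + 1) * Real.exp (-Λ * ((n : ℝ) + 1) ^ α))
          = ENNReal.ofReal (∑' n : ℕ, (b : ℝ) ^ (n + 1) * Real.exp (-Λ * ((n : ℝ) + 1) ^ α)) :=
        (ENNReal.ofReal_tsum_of_nonneg (fun n => by positivity) hrs).symm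
      have hne : (∑' x : {x : T // 1 ≤ D x}, F x.1) ≠ ⊤ := by
        rw [key, hofreal]
        exact ENNReal.ofReal_ne_top
      constructor
      · have := ENNReal.summable_toReal hne
        refine this.congr (fun x => ?_)
        simp [hF, ENNReal.toReal_ofReal (Real.exp_nonneg _)]
      · have h1 : ∑' x : {x : T // 1 ≤ D x}, Real.exp (-Λ * ((D x.1 : ℝ)) ^ α)
            = (∑' x : {x : T // 1 ≤ D x}, F x.1).toReal := by
          rw [ENNReal.tsum_toReal_eq (fun _ => ENNReal.ofReal_ne_top)]
          exact tsum_congr (fun x => by simp [hF, ENNReal.toReal_ofReal (Real.exp_nonneg _)])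
        rw [h1, key, hofreal, ENNReal.toReal_ofReal]
        exact tsum_nonneg (fun n => by positivity)
    exact ⟨hmain.1, hrs, hmain.2⟩
  · -- part (b)
    have hb2 : (2 : ℝ) ≤ b := by exact_mod_cast hb
    have hVnn : ∀ m : ℕ, 0 ≤ (1 + ((m : ℝ))) ^ (-α) := fun m => Real.rpow_nonneg (by positivity) _
    -- summability of V
    have hVsum : Summable (fun k : ℕ => (1 + (k : ℝ)) ^ (-α)) := by
      have h1 : Summable (fun k : ℕ => ((k : ℝ)) ^ (-α)) := Real.summable_nat_rpow.2 (by linarith)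
      have h2 := (summable_nat_add_iff 1).2 h1
      refine h2.congr (fun k => ?_)
      push_cast
      ring_nf
    set SV := ∑' k : ℕ, (1 + (k : ℝ)) ^ (-α) with hSV
    -- t basic facts
    have htnn : ∀ n, 0 ≤ tAux b α n := by
      intro n
      induction n with
      | zero => simp only [tAux]; positivity
      | succ n ih =>
        have := hVnn (n + 1)
        push_cast at this
        simp only [tAux]
        linarith
    -- partial sums of t bounded
    have hP : ∀ n, ∑ k ∈ Finset.range n, tAux b α k ≤ 2 / b + SV := by
      have hshift : Summable (fun k : ℕ => (1 + ((k : ℝ) + 1)) ^ (-α)) := by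
        have := (summable_nat_add_iff 1).2 hVsum
        refine this.congr (fun k => ?_)
        push_cast
        ring_nf
      have htail : (∑' k : ℕ, (1 + ((k : ℝ) + 1)) ^ (-α)) ≤ SV := by
        have h0 := Summable.tsum_eq_zero_add hVsum
        have h1 : (∑' k : ℕ, (1 + ((k + 1 : ℕ) : ℝ)) ^ (-α)) = ∑' k : ℕ, (1 + ((k : ℝ) + 1)) ^ (-α) := by
          apply tsum_congr; intro k; push_cast; ring_nf
        have := hVnn 0
        rw [hSV, h0]
        rw [h1] at *
        simp only [Nat.cast_zero] at this ⊢
        linarith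
      intro n
      have hstep : ∀ m, ∑ k ∈ Finset.range (m+1), tAux b α k
          ≤ 1 / b + (∑ k ∈ Finset.range m, tAux b α k) / 2 + SV / 2 := by
        intro m
        rw [Finset.sum_range_succ']
        have h1 : ∀ k, tAux b α (k+1) = (tAux b α k + (1 + ((k : ℝ) + 1)) ^ (-α)) / 2 := fun k => rfl
        have h2 : ∑ k ∈ Finset.range m, tAux b α (k+1)
            = ((∑ k ∈ Finset.range m, tAux b α k) + ∑ k ∈ Finset.range m, (1 + ((k : ℝ) + 1)) ^ (-α)) / 2 := by
          rw [Finset.sum_congr rfl (fun k _ => h1 k), ← Finset.sum_div, Finset.sum_add_distrib]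
        have h3 : ∑ k ∈ Finset.range m, (1 + ((k : ℝ) + 1)) ^ (-α) ≤ SV := by
          calc ∑ k ∈ Finset.range m, (1 + ((k : ℝ) + 1)) ^ (-α)
              ≤ ∑' k : ℕ, (1 + ((k : ℝ) + 1)) ^ (-α) := by
                apply Summable.sum_le_tsum _ (fun k _ => Real.rpow_nonneg (by positivity) _) hshift
            _ ≤ SV := htail
        have h4 : tAux b α 0 = 1 / b := rfl
        rw [h2, h4]
        linarith
      have hmono : ∑ k ∈ Finset.range n, tAux b α k ≤ ∑ k ∈ Finset.range (n+1), tAux b α k := by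
        rw [Finset.sum_range_succ]
        linarith [htnn n]
      have := hstep n
      have h2b : 2 / (b:ℝ) = 2 * (1 / b) := by ring
      linarith
    -- fg basic facts
    have hfg : ∀ n, 1 ≤ (fgAux b α n).1 ∧ 0 ≤ (fgAux b α n).2 := by
      intro n
      induction n with
      | zero => constructor <;> simp [fgAux] <;> positivity
      | succ n ih =>
        have hV := hVnn (n + 1)
        push_cast at hV
        constructor
        · simp only [fgAux]; linarith [ih.1, ih.2]
        · simp only [fgAux]
          have h1 : (0:ℝ) ≤ (fgAux b α n).1 + (fgAux b α n).2 := by linarith [ih.1, ih.2]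
          apply div_nonneg _ (le_of_lt hbR)
          have := mul_nonneg hV h1
          linarith [ih.2]
    -- g ≤ f * t
    have hgf : ∀ n, (fgAux b α n).2 ≤ (fgAux b α n).1 * tAux b α n := by
      intro n
      induction n with
      | zero => simp [fgAux, tAux]
      | succ n ih =>
        have hV := hVnn (n + 1)
        push_cast at hV
        have h1 : 1 ≤ (fgAux b α n).1 := (hfg n).1
        have h2 : 0 ≤ (fgAux b α n).2 := (hfg n).2
        have ht := htnn n
        have hf' : (fgAux b α n).1 ≤ (fgAux b α (n+1)).1 := by
          simp only [fgAux]; linarith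
        have hf'pos : (0:ℝ) < (fgAux b α (n+1)).1 := by linarith [(hfg (n+1)).1]
        show ((fgAux b α n).2 + (1 + ((n : ℝ) + 1)) ^ (-α) * (fgAux b α (n+1)).1) / (b:ℝ)
            ≤ (fgAux b α (n+1)).1 * ((tAux b α n + (1 + ((n : ℝ) + 1)) ^ (-α)) / 2)
        have hnum : (fgAux b α n).2 + (1 + ((n : ℝ) + 1)) ^ (-α) * (fgAux b α (n+1)).1
            ≤ (fgAux b α (n+1)).1 * (tAux b α n + (1 + ((n : ℝ) + 1)) ^ (-α)) := by
          have : (fgAux b α n).2 ≤ (fgAux b α (n+1)).1 * tAux b α n := by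
            calc (fgAux b α n).2 ≤ (fgAux b α n).1 * tAux b α n := ih
              _ ≤ (fgAux b α (n+1)).1 * tAux b α n := by
                  apply mul_le_mul_of_nonneg_right hf' ht
          linarith [this]
        have hnumnn : (0:ℝ) ≤ (fgAux b α n).2 + (1 + ((n : ℝ) + 1)) ^ (-α) * (fgAux b α (n+1)).1 := by
          positivity
        calc ((fgAux b α n).2 + (1 + ((n : ℝ) + 1)) ^ (-α) * (fgAux b α (n+1)).1) / (b:ℝ)
            ≤ ((fgAux b α n).2 + (1 + ((n : ℝ) + 1)) ^ (-α) * (fgAux b α (n+1)).1) / 2 := by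
              apply div_le_div_of_nonneg_left hnumnn (by norm_num) hb2
          _ ≤ ((fgAux b α (n+1)).1 * (tAux b α n + (1 + ((n : ℝ) + 1)) ^ (-α))) / 2 := by
              linarith
          _ = (fgAux b α (n+1)).1 * ((tAux b α n + (1 + ((n : ℝ) + 1)) ^ (-α)) / 2) := by ring
    -- f n ≤ exp (partial sum of t)
    have hfexp : ∀ n, (fgAux b α n).1 ≤ Real.exp (∑ k ∈ Finset.range n, tAux b α k) := by
      intro n
      induction n with
      | zero => simp [fgAux]
      | succ n ih =>
        have h1 : (fgAux b α (n+1)).1 = (fgAux b α n).1 + (fgAux b α n).2 := rfl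
        have h2 : (fgAux b α n).1 + (fgAux b α n).2 ≤ (fgAux b α n).1 * (1 + tAux b α n) := by
          have := hgf n
          nlinarith [(hfg n).1]
        have h3 : (1 : ℝ) + tAux b α n ≤ Real.exp (tAux b α n) := by
          have := Real.add_one_le_exp (tAux b α n)
          linarith
        rw [h1, Finset.sum_range_succ, Real.exp_add]
        calc (fgAux b α n).1 + (fgAux b α n).2
            ≤ (fgAux b α n).1 * (1 + tAux b α n) := h2
          _ ≤ Real.exp (∑ k ∈ Finset.range n, tAux b α k) * Real.exp (tAux b α n) := by
              apply mul_le_mul ih h3 (by linarith [htnn n]) (le_of_lt (Real.exp_pos _))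
    set C := Real.exp (2 / b + SV) with hC
    have hfbound : ∀ n : ℕ, 1 ≤ (fgAux b α n).1 ∧ (fgAux b α n).1 ≤ C := by
      intro n
      refine ⟨(hfg n).1, ?_⟩
      calc (fgAux b α n).1 ≤ Real.exp (∑ k ∈ Finset.range n, tAux b α k) := hfexp n
        _ ≤ C := Real.exp_le_exp.2 (hP n)
    set u : T → ℝ := fun x => (fgAux b α (D x)).1 with hu
    refine ⟨u, ⟨x₀, ?_⟩, ⟨C, ?_⟩, ?_⟩
    · simp only [hu, hD₀]
      norm_num [fgAux]
    · intro x
      rw [hu]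
      simp only
      rw [abs_of_nonneg (by linarith [(hfbound (D x)).1])]
      exact (hfbound (D x)).2
    · -- the equation
      have hUpCard : ∀ x : T, ((hUpFin x).toFinset).card = b := by
        intro x
        rw [← Set.ncard_eq_toFinset_card _ (hUpFin x)]
        exact hup x
      have hUpSum : ∀ x : T, ∑ y ∈ (hUpFin x).toFinset, ω x y * (u y - u x)
          = (b : ℝ) * ((fgAux b α (D x + 1)).1 - (fgAux b α (D x)).1) := by
        intro x
        have hc : ∀ y ∈ (hUpFin x).toFinset,
            ω x y * (u y - u x) = (fgAux b α (D x + 1)).1 - (fgAux b α (D x)).1 := by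
          intro y hy
          rw [Set.Finite.mem_toFinset] at hy
          rw [hy.1, hu]
          simp only [hy.2, one_mul]
        rw [Finset.sum_congr rfl hc, Finset.sum_const, hUpCard, nsmul_eq_mul]
      intro x
      by_cases hx : x = x₀
      · have hDx0 : D x = 0 := by rw [hx, hD₀]
        have hsupp : ∀ y ∉ (hUpFin x).toFinset, ω x y * (u y - u x) = 0 := by
          intro y hy
          rcases hω01 x y with h | h
          · rw [h]; ring
          · exfalso
            rcases hadj x y h with h2 | h2
            · exact hy (by rw [Set.Finite.mem_toFinset]; exact ⟨h, h2⟩)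
            · rw [hDx0] at h2; omega
        rw [tsum_eq_sum hsupp, hUpSum x]
        have h1 : (fgAux b α 1).1 = 1 + 1 / (b : ℝ) := by simp [fgAux]
        have h0 : (fgAux b α 0).1 = 1 := rfl
        rw [hV]
        simp only [hu, hDx0, zero_add, h1, h0]
        simp only [Nat.cast_zero, add_zero, zero_add, Real.one_rpow]
        field_simp
        ring
      · obtain ⟨z, hz⟩ := hDownOne x hx
        have hzmem : z ∈ {y : T | ω x y = 1 ∧ D y + 1 = D x} := by rw [hz]; rfl
        obtain ⟨hωz, hDz⟩ := hzmem
        have hm : 1 ≤ D x := hDpos x hx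
        set m := D x - 1 with hmdef
        have hDx : D x = m + 1 := by omega
        have hDzm : D z = m := by omega
        have hznotup : z ∉ (hUpFin x).toFinset := by
          rw [Set.Finite.mem_toFinset]
          rintro ⟨_, h2⟩
          omega
        have hsupp : ∀ y ∉ insert z (hUpFin x).toFinset, ω x y * (u y - u x) = 0 := by
          intro y hy
          rcases hω01 x y with h | h
          · rw [h]; ring
          · exfalso
            rcases hadj x y h with h2 | h2
            · exact hy (Finset.mem_insert_of_mem (by rw [Set.Finite.mem_toFinset]; exact ⟨h, h2⟩))
            · have hyz : y ∈ {w : T | ω x w = 1 ∧ D w + 1 = D x} := ⟨h, by omega⟩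
              rw [hz] at hyz
              simp only [Set.mem_singleton_iff] at hyz
              exact hy (by rw [hyz]; exact Finset.mem_insert_self _ _)
        rw [tsum_eq_sum hsupp, Finset.sum_insert hznotup, hUpSum x]
        rw [hωz, one_mul, hV]
        simp only [hu, hDzm, hDx]
        have hc : (1 + ((m + 1 : ℕ) : ℝ)) ^ (-α) = (1 + ((m : ℝ) + 1)) ^ (-α) := by
          norm_num
        have h2 : (fgAux b α (m + 1 + 1)).1 = (fgAux b α (m+1)).1 + (fgAux b α (m+1)).2 := rfl
        have h3 : (fgAux b α (m+1)).2
            = ((fgAux b α m).2 + (1 + ((m : ℝ) + 1)) ^ (-α) * (fgAux b α (m+1)).1) / (b : ℝ) := rfl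
        have h4 : (fgAux b α (m+1)).1 = (fgAux b α m).1 + (fgAux b α m).2 := rfl
        rw [h2, h3, h4, hc]
        field_simp
        ring
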